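/- In particular, for tau a real number, det(I_{alpha_i + beta_j}(tau))_{i,j=1}^s > 0 whenever alpha_1 > alpha_2 > ... > alpha_s >= 0 and beta_1 > beta_2 > ... > beta_s >= 0 are non-negative integers, where I_r(tau) = ∫_0^1 x^r e^{-tau x} dx. -/

import Mathlib

open Matrix Set MeasureTheory

lemma rootlem : ∀ (s : ℕ) (e : Fin s → ℕ), StrictAnti e → ∀ (c x : Fin s → ℝ),
    StrictAnti x → (∀ j, 0 < x j) → (∀ j, ∑ i, c i * x j ^ e i = 0) → ∀ i, c i = 0 := by
  intro s
  induction s with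
  | zero => intro e _ c x _ _ _ i; exact i.elim0
  | succ s ih =>
    intro e he c x hx hxpos hroot
    set m := e (Fin.last s) with hm
    have hme : ∀ i, m ≤ e i := fun i => he.antitone (Fin.le_last i)
    set q : ℝ → ℝ := fun t => ∑ i, c i * t ^ (e i - m) with hq
    have hqx : ∀ j, q (x j) = 0 := by
      intro j
      have key : ∀ i, x j ^ m * (c i * x j ^ (e i - m)) = c i * x j ^ e i := by
        intro i; rw [mul_left_comm, ← pow_add]; congr 2; have := hme i; omega
      have h1 : (x j) ^ m * q (x j) = 0 := by
        simp only [hq, Finset.mul_sum, key]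
        exact hroot j
      have h2 : (x j) ^ m ≠ 0 := pow_ne_zero m (ne_of_gt (hxpos j))
      exact (mul_eq_zero.mp h1).resolve_left h2
    have hqd : ∀ t : ℝ, HasDerivAt q (∑ i, c i * ((e i - m : ℕ) * t ^ (e i - m - 1))) t := by
      intro t
      apply HasDerivAt.fun_sum
      intro i _
      exact (hasDerivAt_pow (e i - m) t).const_mul (c i)
    have hqc : Continuous q := by
      rw [continuous_iff_continuousAt]
      exact fun t => (hqd t).differentiableAt.continuousAt
    have hy : ∀ j : Fin s, ∃ y, x j.succ < y ∧ y < x j.castSucc ∧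
        (∑ i, c i * ((e i - m : ℕ) * y ^ (e i - m - 1))) = 0 := by
      intro j
      have hlt : x j.succ < x j.castSucc := hx (Fin.castSucc_lt_succ (i := j))
      obtain ⟨y, hy1, hy2⟩ := exists_deriv_eq_zero hlt hqc.continuousOn
        ((hqx j.succ).trans (hqx j.castSucc).symm)
      refine ⟨y, hy1.1, hy1.2, ?_⟩
      rw [← hy2]
      exact ((hqd y).deriv).symm
    choose y hy1 hy2 hy3 using hy
    have hylt : StrictAnti y := by
      intro i j hij
      calc y j < x j.castSucc := hy2 j
        _ ≤ x i.succ := hx.antitone (Fin.succ_le_castSucc_iff.mpr hij)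
        _ < y i := hy1 i
    have hypos : ∀ j, 0 < y j := fun j => lt_trans (hxpos j.succ) (hy1 j)
    have he' : StrictAnti (fun i : Fin s => e i.castSucc - m - 1) := by
      intro i j hij
      have h1 : e j.castSucc < e i.castSucc := he (by exact_mod_cast Fin.castSucc_lt_castSucc_iff.mpr hij)
      have h2 : m < e j.castSucc := he (Fin.castSucc_lt_last j)
      show e j.castSucc - m - 1 < e i.castSucc - m - 1
      omega
    have hc' : ∀ i : Fin s, c i.castSucc * ((e i.castSucc - m : ℕ)) = 0 := by
      apply ih _ he' _ y hylt hypos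
      intro j
      have := hy3 j
      rw [Fin.sum_univ_castSucc] at this
      simp only [← hm, Nat.sub_self, Nat.cast_zero, zero_mul, mul_zero, add_zero] at this
      rw [← this]
      apply Finset.sum_congr rfl
      intro i _
      ring
    have hcc : ∀ i : Fin s, c i.castSucc = 0 := by
      intro i
      have h2 : m < e i.castSucc := he (Fin.castSucc_lt_last i)
      have : ((e i.castSucc - m : ℕ) : ℝ) ≠ 0 := by
        exact_mod_cast Nat.sub_ne_zero_of_lt h2
      exact (mul_eq_zero.mp (hc' i)).resolve_right this
    have hclast : c (Fin.last s) = 0 := by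
      have := hroot 0
      rw [Fin.sum_univ_castSucc] at this
      simp only [hcc, zero_mul, Finset.sum_const_zero, zero_add] at this
      have hp : x (0 : Fin (s+1)) ^ e (Fin.last s) ≠ 0 := pow_ne_zero _ (ne_of_gt (hxpos 0))
      exact (mul_eq_zero.mp this).resolve_right hp
    intro i
    refine Fin.lastCases ?_ ?_ i
    · exact hclast
    · exact hcc

lemma vandermonde_pos : ∀ (s : ℕ) (a : Fin s → ℕ) (x : Fin s → ℝ), StrictAnti a → StrictAnti x →
    (∀ j, 0 < x j) → 0 < Matrix.det (Matrix.of fun i j => x j ^ a i) := by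
  intro s
  induction s with
  | zero => intro a x _ _ _; simp [Matrix.det_isEmpty]
  | succ s ih =>
    intro a x ha hx hxpos
    by_cases ha0 : a 0 = 0
    · -- then s = 0
      have hs : s = 0 := by
        by_contra hs
        have h1 : (0 : Fin (s+1)) < ⟨1, by omega⟩ := by
          rw [Fin.lt_def]; simp
        exact absurd (ha h1) (by omega)
      subst hs
      have : Matrix.det (Matrix.of fun i j : Fin 1 => x j ^ a i) = x 0 ^ a 0 :=
        Matrix.det_fin_one _
      rw [this]
      exact pow_pos (hxpos 0) _
    · have ha0' : 0 < a 0 := Nat.pos_of_ne_zero ha0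
      set v : ℝ → Fin (s+1) → ℝ := fun t => Fin.cons t (fun j : Fin s => x j.succ) with hv
      set b : ℝ := if h : s = 0 then 0 else x ⟨1, by omega⟩ with hb
      have hbx : b < x 0 := by
        rw [hb]
        split
        · exact hxpos 0
        · exact hx (by rw [Fin.lt_def]; simp)
      have hvx : ∀ t, ∀ j : Fin (s+1), j ≠ 0 → v t j = x j := by
        intro t j
        refine Fin.cases ?_ ?_ j
        · intro h; exact absurd rfl h
        · intro k _; simp [hv]
      have hvlt : ∀ t ∈ Ioi b, StrictAnti (v t) ∧ ∀ j, 0 < v t j := by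
        intro t ht
        have hb0 : 0 ≤ b := by
          rw [hb]; split
          · exact le_refl 0
          · exact le_of_lt (hxpos _)
        have htpos : 0 < t := lt_of_le_of_lt hb0 ht
        have htail : ∀ j : Fin (s+1), j ≠ 0 → x j < t := by
          intro j hj
          have hs : s ≠ 0 := by
            rintro rfl
            exact hj (Fin.fin_one_eq_zero j)
          have hj1 : (0 : Fin (s+1)) < j := Fin.pos_of_ne_zero hj
          rw [Fin.lt_def] at hj1
          have h1 : x j ≤ x ⟨1, by omega⟩ := by
            apply hx.antitone
            rw [Fin.le_def]
            show 1 ≤ (j:ℕ); have h0 : ((0 : Fin (s+1)) : ℕ) = 0 := rfl; omega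
          have h2 : x j ≤ b := by
            rw [hb, dif_neg hs]; exact h1
          exact lt_of_le_of_lt h2 ht
        constructor
        · rw [Fin.strictAnti_iff_succ_lt]
          intro i
          have h1 : v t i.succ = x i.succ := hvx t i.succ (Fin.succ_ne_zero i)
          by_cases hc : i.castSucc = 0
          · rw [h1, hc]
            have : v t 0 = t := rfl
            rw [this]
            exact htail i.succ (Fin.succ_ne_zero i)
          · rw [h1, hvx t i.castSucc hc]
            exact hx (Fin.castSucc_lt_succ (i := i))
        · intro j
          by_cases hj : j = 0
          · rw [hj]; exact htpos
          · rw [hvx t j hj]; exact hxpos j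
      set f : ℝ → ℝ := fun t => Matrix.det (Matrix.of fun i j => v t j ^ a i) with hf
      have hfne : ∀ t ∈ Ioi b, f t ≠ 0 := by
        intro t ht h0
        obtain ⟨c, hc0, hcv⟩ := Matrix.exists_vecMul_eq_zero_iff.mpr h0
        have hall := rootlem (s+1) a ha c (v t) (hvlt t ht).1 (hvlt t ht).2 ?_
        · exact hc0 (by funext i; exact hall i)
        · intro j
          have := congrFun hcv j
          simpa [Matrix.vecMul, dotProduct] using this
      set C : Fin (s+1) → ℝ := fun i => Matrix.det (Matrix.of fun k l : Fin s => x l.succ ^ a (i.succAbove k)) with hC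
      have hdet : ∀ t, f t = ∑ i : Fin (s+1), (-1:ℝ)^(i:ℕ) * t ^ a i * C i := by
        intro t
        rw [hf]
        simp only
        rw [Matrix.det_succ_column_zero]
        apply Finset.sum_congr rfl
        intro i _
        have e1 : Matrix.of (fun i j => v t j ^ a i) i 0 = t ^ a i := by simp [hv]
        have e2 : ((Matrix.of fun i j => v t j ^ a i).submatrix i.succAbove Fin.succ).det = C i := by
          rw [hC]
          have : (Matrix.of fun i j => v t j ^ a i).submatrix i.succAbove Fin.succ
              = Matrix.of (fun k l : Fin s => x l.succ ^ a (i.succAbove k)) := by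
            ext k l
            simp [Matrix.submatrix, hv]
          rw [this]
        rw [e1, e2]
      have hC0 : 0 < C 0 := by
        rw [hC]
        simp only [Fin.succAbove_zero]
        exact ih (a ∘ Fin.succ) (fun j => x j.succ)
          (ha.comp_strictMono Fin.strictMono_succ)
          (hx.comp_strictMono Fin.strictMono_succ)
          (fun j => hxpos j.succ)
      set S : ℝ := ∑ i, |C i| with hS
      set T : ℝ := max (max (x 0) 1) (S / C 0 + 1) with hT
      have hT1 : (1:ℝ) ≤ T := le_trans (le_max_right (x 0) 1) (le_max_left _ _)
      have hTx : x 0 ≤ T := le_trans (le_max_left (x 0) 1) (le_max_left _ _)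
      have hTS : S / C 0 < T := lt_of_lt_of_le (lt_add_one _) (le_max_right _ _)
      have hfT : 0 < f T := by
        have hTpos : (0:ℝ) < T := lt_of_lt_of_le one_pos hT1
        have hSC : S < T * C 0 := (div_lt_iff₀ hC0).mp hTS
        rw [hdet T, Fin.sum_univ_succ]
        have habs : |∑ i : Fin s, (-1:ℝ)^((Fin.succ i : Fin (s+1)) : ℕ) * T ^ a i.succ * C i.succ| ≤ T ^ (a 0 - 1) * S := by
          calc |∑ i : Fin s, (-1:ℝ)^((Fin.succ i : Fin (s+1)) : ℕ) * T ^ a i.succ * C i.succ|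
              ≤ ∑ i : Fin s, |(-1:ℝ)^((Fin.succ i : Fin (s+1)) : ℕ) * T ^ a i.succ * C i.succ| :=
                Finset.abs_sum_le_sum_abs _ _
            _ ≤ ∑ i : Fin s, T ^ (a 0 - 1) * |C i.succ| := by
                apply Finset.sum_le_sum
                intro i _
                rw [abs_mul, abs_mul]
                have e1 : |(-1:ℝ)^((Fin.succ i : Fin (s+1)) : ℕ)| = 1 := by
                  rw [abs_pow, abs_neg, abs_one, one_pow]
                rw [e1, one_mul]
                have e2 : |T ^ a i.succ| = T ^ a i.succ := abs_of_pos (pow_pos hTpos _)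
                rw [e2]
                apply mul_le_mul_of_nonneg_right _ (abs_nonneg _)
                apply pow_le_pow_right₀ hT1
                have := ha (Fin.succ_pos i)
                omega
            _ = T ^ (a 0 - 1) * ∑ i : Fin s, |C i.succ| := by rw [Finset.mul_sum]
            _ ≤ T ^ (a 0 - 1) * S := by
                apply mul_le_mul_of_nonneg_left _ (le_of_lt (pow_pos hTpos _))
                rw [hS, Fin.sum_univ_succ]
                have := abs_nonneg (C 0)
                linarith
        have hTa : T ^ a 0 = T ^ (a 0 - 1) * T := by
          rw [← pow_succ]; congr 1; omega
        have hp1 : (0:ℝ) < T ^ (a 0 - 1) := pow_pos hTpos _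
        have h2 : T ^ (a 0 - 1) * S < T ^ a 0 * C 0 := by
          rw [hTa, mul_assoc]
          exact mul_lt_mul_of_pos_left hSC hp1
        have h3 := (abs_le.mp habs).1
        simp only [Fin.val_zero, pow_zero, one_mul]
        linarith
      have hfc : Continuous f := by
        have : f = fun t => ∑ i : Fin (s+1), (-1:ℝ)^(i:ℕ) * t ^ a i * C i := funext hdet
        rw [this]
        apply continuous_finset_sum
        intro i _
        exact (continuous_const.mul (continuous_pow (a i))).mul continuous_const
      have hfx0 : f (x 0) ≠ 0 := hfne (x 0) (mem_Ioi.mpr hbx)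
      rcases lt_or_gt_of_ne hfx0 with hneg | hpos
      · exfalso
        have h0 : (0:ℝ) ∈ Ioo (f (x 0)) (f T) := ⟨hneg, hfT⟩
        obtain ⟨z, hz1, hz2⟩ := intermediate_value_Ioo hTx hfc.continuousOn h0
        exact hfne z (mem_Ioi.mpr (lt_trans hbx hz1.1)) hz2
      · have hvx0 : v (x 0) = x := Fin.cons_self_tail x
        have : (Matrix.of fun i j => x j ^ a i) = (Matrix.of fun i j => v (x 0) j ^ a i) := by
          rw [hvx0]
        rw [this]
        exact hpos


lemma integrable_prod_box {s : ℕ} (g : Fin s → ℝ → ℝ) (B : ℝ)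
    (hm : ∀ j, Measurable (g j)) (hb : ∀ j t, |g j t| ≤ B)
    (h0 : ∀ j t, t ∉ Set.Ioc (0:ℝ) 1 → g j t = 0) :
    Integrable (fun y : Fin s → ℝ => ∏ j, g j (y j)) := by
  have hmeas : Measurable (fun y : Fin s → ℝ => ∏ j, g j (y j)) :=
    Finset.measurable_prod _ (fun j _ => (hm j).comp (measurable_pi_apply j))
  set box : Set (Fin s → ℝ) := Set.pi Set.univ (fun _ => Set.Ioc (0:ℝ) 1) with hbox
  have hboxm : MeasurableSet box := MeasurableSet.univ_pi (fun _ => measurableSet_Ioc)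
  have hboxvol : volume box < ⊤ := by
    rw [hbox, volume_pi_pi]
    simp [Real.volume_Ioc]
  apply Integrable.mono' (g := box.indicator (fun _ => B ^ s))
  · exact (integrable_indicator_iff hboxm).mpr (integrableOn_const hboxvol.ne)
  · exact hmeas.aestronglyMeasurable
  · apply ae_of_all
    intro y
    by_cases hy : y ∈ box
    · rw [Set.indicator_of_mem hy]
      have h1 : ‖∏ j, g j (y j)‖ = ∏ j, |g j (y j)| := by
        rw [Real.norm_eq_abs, Finset.abs_prod]
      rw [h1]
      calc ∏ j, |g j (y j)| ≤ ∏ _j : Fin s, B :=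
            Finset.prod_le_prod (fun j _ => abs_nonneg _) (fun j _ => hb j (y j))
        _ = B ^ s := by rw [Finset.prod_const, Finset.card_univ, Fintype.card_fin]
    · rw [Set.indicator_of_notMem hy]
      have hex : ∃ j, y j ∉ Set.Ioc (0:ℝ) 1 := by
        by_contra h
        push_neg at h
        exact hy (fun j _ => h j)
      obtain ⟨j, hj⟩ := hex
      rw [show (∏ j, g j (y j)) = 0 from Finset.prod_eq_zero (Finset.mem_univ j) (h0 j _ hj)]
      simp

theorem stmt_13' (s : ℕ) (τ : ℝ) (α β : Fin s → ℕ)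
    (hα : StrictAnti α) (hβ : StrictAnti β) :
    0 < Matrix.det (Matrix.of fun i j : Fin s =>
        ∫ x in (0:ℝ)..1, x ^ (α i + β j) * Real.exp (-τ * x)) := by
  classical
  set w : ℝ → ℝ := Set.indicator (Set.Ioc 0 1) (fun t => Real.exp (-τ * t)) with hw
  have hwm : Measurable w :=
    Measurable.indicator (by fun_prop) measurableSet_Ioc
  have hw0 : ∀ (k : ℕ) (t : ℝ), t ∉ Set.Ioc (0:ℝ) 1 → t ^ k * w t = 0 := by
    intro k t ht
    rw [hw, Set.indicator_of_notMem ht, mul_zero]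
  have hwb : ∀ (k : ℕ) (t : ℝ), |t ^ k * w t| ≤ Real.exp |τ| := by
    intro k t
    by_cases ht : t ∈ Set.Ioc (0:ℝ) 1
    · rw [hw, Set.indicator_of_mem ht]
      rw [abs_mul, abs_pow]
      have h1 : |t| ≤ 1 := by
        rw [abs_of_pos ht.1]; exact ht.2
      have h2 : |t| ^ k ≤ 1 := pow_le_one₀ (abs_nonneg t) h1
      have h3 : |Real.exp (-τ * t)| = Real.exp (-τ * t) := abs_of_pos (Real.exp_pos _)
      rw [h3]
      have h4 : Real.exp (-τ * t) ≤ Real.exp |τ| := by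
        apply Real.exp_le_exp.mpr
        calc -τ * t ≤ |(-τ) * t| := le_abs_self _
          _ = |τ| * |t| := by rw [abs_mul, abs_neg]
          _ ≤ |τ| * 1 := by
              apply mul_le_mul_of_nonneg_left h1 (abs_nonneg τ)
          _ = |τ| := mul_one _
      calc |t| ^ k * Real.exp (-τ * t) ≤ 1 * Real.exp (-τ * t) :=
            mul_le_mul_of_nonneg_right h2 (le_of_lt (Real.exp_pos _))
        _ = Real.exp (-τ * t) := one_mul _
        _ ≤ Real.exp |τ| := h4
    · rw [hw0 k t ht]
      simp [le_of_lt (Real.exp_pos _)]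
  have hwpos : ∀ t ∈ Set.Ioc (0:ℝ) 1, 0 < w t := by
    intro t ht
    rw [hw, Set.indicator_of_mem ht]
    exact Real.exp_pos _
  -- integrability of box products
  have intgr : ∀ (k : Fin s → ℕ),
      Integrable (fun y : Fin s → ℝ => ∏ j, (y j) ^ (k j) * w (y j)) := by
    intro k
    apply integrable_prod_box (fun j t => t ^ (k j) * w t) (Real.exp |τ|)
    · intro j; exact (measurable_id.pow_const _).mul hwm
    · intro j t; exact hwb _ t
    · intro j t ht; exact hw0 _ t ht
  -- entries
  have entry : ∀ k : ℕ, (∫ x in (0:ℝ)..1, x ^ k * Real.exp (-τ * x)) = ∫ t : ℝ, t ^ k * w t := by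
    intro k
    rw [intervalIntegral.integral_of_le zero_le_one,
      ← MeasureTheory.integral_indicator measurableSet_Ioc]
    congr 1
    funext t
    by_cases ht : t ∈ Set.Ioc (0:ℝ) 1
    · rw [Set.indicator_of_mem ht, hw, Set.indicator_of_mem ht]
    · rw [Set.indicator_of_notMem ht, hw0 k t ht]
  -- change of variables
  have hchg : ∀ (ρ : Equiv.Perm (Fin s)) (H : (Fin s → ℝ) → ℝ),
      ∫ y : Fin s → ℝ, H y = ∫ y : Fin s → ℝ, H (fun j => y (ρ⁻¹ j)) := by
    intro ρ H
    rw [← (volume_measurePreserving_piCongrLeft (fun _ : Fin s => ℝ)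
      (ρ : Fin s ≃ Fin s)).integral_comp' H]
    congr 1
    funext y
    congr 1
    funext j
    show (MeasurableEquiv.piCongrLeft (fun _ : Fin s => ℝ) (ρ : Fin s ≃ Fin s)) y j = y (ρ⁻¹ j)
    have h := Equiv.piCongrLeft_apply_apply (fun _ : Fin s => ℝ) (ρ : Fin s ≃ Fin s) y (ρ⁻¹ j)
    rw [MeasurableEquiv.coe_piCongrLeft]
    simpa using h
  set Bfun : Equiv.Perm (Fin s) → Equiv.Perm (Fin s) → ℝ :=
    fun π ρ => ∫ y : Fin s → ℝ, ∏ k, (y k) ^ (α (π k) + β (ρ k)) * w (y k) with hBfun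
  set A : Equiv.Perm (Fin s) → ℝ :=
    fun σ => ∫ y : Fin s → ℝ, ∏ i, (y i) ^ (α (σ i) + β i) * w (y i) with hAdef
  have hA : Matrix.det (Matrix.of fun i j : Fin s =>
      ∫ x in (0:ℝ)..1, x ^ (α i + β j) * Real.exp (-τ * x))
      = ∑ σ : Equiv.Perm (Fin s), ((Equiv.Perm.sign σ : ℤ) : ℝ) * A σ := by
    rw [Matrix.det_apply']
    apply Finset.sum_congr rfl
    intro σ _
    congr 1
    rw [hAdef]
    simp only [Matrix.of_apply]
    rw [Finset.prod_congr rfl (fun i (_ : i ∈ Finset.univ) => entry (α (σ i) + β i))]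
    exact (MeasureTheory.integral_fintype_prod_eq_prod
      (fun i t => t ^ (α (σ i) + β i) * w t)).symm
  have hB : ∀ (σ ρ : Equiv.Perm (Fin s)), A σ = Bfun (σ * ρ) ρ := by
    intro σ ρ
    rw [hAdef, hBfun]
    simp only
    rw [hchg ρ (fun y => ∏ i, (y i) ^ (α (σ i) + β i) * w (y i))]
    congr 1
    funext y
    rw [← Equiv.prod_comp ρ (fun i => (y (ρ⁻¹ i)) ^ (α (σ i) + β i) * w (y (ρ⁻¹ i)))]
    apply Finset.prod_congr rfl
    intro k _
    simp [Equiv.Perm.mul_apply]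
  have hsq : ∀ ρ : Equiv.Perm (Fin s),
      ((Equiv.Perm.sign ρ : ℤ) : ℝ) * ((Equiv.Perm.sign ρ : ℤ) : ℝ) = 1 := by
    intro ρ
    rcases Int.units_eq_one_or (Equiv.Perm.sign ρ) with h | h <;> rw [h] <;> norm_num
  have hsgnmul : ∀ σ ρ : Equiv.Perm (Fin s),
      ((Equiv.Perm.sign (σ * ρ) : ℤ) : ℝ)
        = ((Equiv.Perm.sign σ : ℤ) : ℝ) * ((Equiv.Perm.sign ρ : ℤ) : ℝ) := by
    intro σ ρ
    rw [_root_.map_mul Equiv.Perm.sign σ ρ]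
    push_cast
    ring
  have h3 : ∀ ρ : Equiv.Perm (Fin s),
      Matrix.det (Matrix.of fun i j : Fin s =>
        ∫ x in (0:ℝ)..1, x ^ (α i + β j) * Real.exp (-τ * x))
      = ((Equiv.Perm.sign ρ : ℤ) : ℝ)
          * ∑ π : Equiv.Perm (Fin s), ((Equiv.Perm.sign π : ℤ) : ℝ) * Bfun π ρ := by
    intro ρ
    rw [hA, Finset.mul_sum]
    apply Fintype.sum_equiv (Equiv.mulRight ρ)
    intro σ
    rw [hB σ ρ]
    have h1 : Equiv.mulRight ρ σ = σ * ρ := rfl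
    rw [h1]
    calc ((Equiv.Perm.sign σ : ℤ) : ℝ) * Bfun (σ * ρ) ρ
        = (((Equiv.Perm.sign ρ : ℤ) : ℝ) * ((Equiv.Perm.sign ρ : ℤ) : ℝ))
            * (((Equiv.Perm.sign σ : ℤ) : ℝ) * Bfun (σ * ρ) ρ) := by rw [hsq]; ring
      _ = ((Equiv.Perm.sign ρ : ℤ) : ℝ)
            * (((Equiv.Perm.sign (σ * ρ) : ℤ) : ℝ) * Bfun (σ * ρ) ρ) := by
          rw [hsgnmul]; ring
  have h4 : ((Fintype.card (Equiv.Perm (Fin s)) : ℝ))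
        * Matrix.det (Matrix.of fun i j : Fin s =>
          ∫ x in (0:ℝ)..1, x ^ (α i + β j) * Real.exp (-τ * x))
      = ∑ ρ : Equiv.Perm (Fin s), ∑ π : Equiv.Perm (Fin s),
          ((Equiv.Perm.sign ρ * Equiv.Perm.sign π : ℤ) : ℝ) * Bfun π ρ := by
    rw [← Finset.card_univ, ← nsmul_eq_mul, ← Finset.sum_const]
    apply Finset.sum_congr rfl
    intro ρ _
    rw [h3 ρ, Finset.mul_sum]
    apply Finset.sum_congr rfl
    intro π _
    push_cast
    ring
  set G : (Fin s → ℝ) → ℝ := fun y => ∑ ρ : Equiv.Perm (Fin s), ∑ π : Equiv.Perm (Fin s),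
      ((Equiv.Perm.sign ρ * Equiv.Perm.sign π : ℤ) : ℝ)
        * ∏ k, (y k) ^ (α (π k) + β (ρ k)) * w (y k) with hG
  have hint1 : ∀ (c : ℝ) (kk : Fin s → ℕ),
      Integrable (fun y : Fin s → ℝ => c * ∏ k, (y k) ^ (kk k) * w (y k)) :=
    fun c kk => (intgr kk).const_mul c
  have hswap : ∑ ρ : Equiv.Perm (Fin s), ∑ π : Equiv.Perm (Fin s),
      ((Equiv.Perm.sign ρ * Equiv.Perm.sign π : ℤ) : ℝ) * Bfun π ρ = ∫ y : Fin s → ℝ, G y := by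
    rw [hG]
    rw [MeasureTheory.integral_finset_sum _
      (fun ρ _ => integrable_finset_sum _ (fun π _ => hint1 _ _))]
    apply Finset.sum_congr rfl
    intro ρ _
    rw [MeasureTheory.integral_finset_sum _ (fun π _ => hint1 _ _)]
    apply Finset.sum_congr rfl
    intro π _
    rw [MeasureTheory.integral_const_mul, hBfun]
  have hGform : ∀ y : Fin s → ℝ, G y =
      Matrix.det (Matrix.of fun i j : Fin s => y j ^ α i)
        * Matrix.det (Matrix.of fun i j : Fin s => y j ^ β i) * ∏ k, w (y k) := by
    intro y
    rw [hG, Matrix.det_apply', Matrix.det_apply']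
    simp only [Matrix.of_apply]
    rw [Finset.sum_comm]
    rw [Finset.sum_mul_sum, Finset.sum_mul]
    apply Finset.sum_congr rfl
    intro π _
    rw [Finset.sum_mul]
    apply Finset.sum_congr rfl
    intro ρ _
    have hsplit : ∏ k, (y k) ^ (α (π k) + β (ρ k)) * w (y k)
        = (∏ k, (y k) ^ (α (π k))) * (∏ k, (y k) ^ (β (ρ k))) * ∏ k, w (y k) := by
      rw [Finset.prod_mul_distrib]
      congr 1
      rw [← Finset.prod_mul_distrib]
      apply Finset.prod_congr rfl
      intro k _
      rw [pow_add]
    rw [hsplit]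
    push_cast
    ring
  have hkey := h4.trans hswap
  have hGint : Integrable G := by
    have : Integrable (fun y : Fin s → ℝ => ∑ ρ : Equiv.Perm (Fin s), ∑ π : Equiv.Perm (Fin s),
        ((Equiv.Perm.sign ρ * Equiv.Perm.sign π : ℤ) : ℝ)
          * ∏ k, (y k) ^ (α (π k) + β (ρ k)) * w (y k)) :=
      integrable_finset_sum _ (fun ρ _ => integrable_finset_sum _ (fun π _ => hint1 _ _))
    exact this
  have hGnonneg : ∀ y : Fin s → ℝ, 0 ≤ G y := by
    intro y
    rw [hGform y]
    by_cases hin : ∀ k, y k ∈ Set.Ioc (0:ℝ) 1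
    · by_cases hinj : Function.Injective y
      · set σ := Tuple.sort (fun k => -(y k)) with hσ
        have hmono : Monotone ((fun k => -(y k)) ∘ σ) := Tuple.monotone_sort _
        have hsa : StrictAnti (y ∘ σ) := by
          intro i j hij
          have h1 : -(y (σ i)) ≤ -(y (σ j)) := hmono (le_of_lt hij)
          have h2 : y (σ j) ≤ y (σ i) := by
            linarith
          have h3 : y (σ j) ≠ y (σ i) := by
            intro h
            exact (ne_of_lt hij) (σ.injective (hinj h)).symm
          exact lt_of_le_of_ne h2 h3
        have hypos : ∀ k, 0 < (y ∘ σ) k := fun k => (hin (σ k)).1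
        have hA1 : 0 < Matrix.det (Matrix.of fun i j : Fin s => (y ∘ σ) j ^ α i) :=
          vandermonde_pos s α (y ∘ σ) hα hsa hypos
        have hB1 : 0 < Matrix.det (Matrix.of fun i j : Fin s => (y ∘ σ) j ^ β i) :=
          vandermonde_pos s β (y ∘ σ) hβ hsa hypos
        have epermA : Matrix.det (Matrix.of fun i j : Fin s => (y ∘ σ) j ^ α i)
            = ((Equiv.Perm.sign σ : ℤ) : ℝ) * Matrix.det (Matrix.of fun i j : Fin s => y j ^ α i) := by
          have h5 : (Matrix.of fun i j : Fin s => y j ^ α i).submatrix id σ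
              = Matrix.of (fun i j : Fin s => (y ∘ σ) j ^ α i) := rfl
          rw [← h5, Matrix.det_permute']
        have epermB : Matrix.det (Matrix.of fun i j : Fin s => (y ∘ σ) j ^ β i)
            = ((Equiv.Perm.sign σ : ℤ) : ℝ) * Matrix.det (Matrix.of fun i j : Fin s => y j ^ β i) := by
          have h5 : (Matrix.of fun i j : Fin s => y j ^ β i).submatrix id σ
              = Matrix.of (fun i j : Fin s => (y ∘ σ) j ^ β i) := rfl
          rw [← h5, Matrix.det_permute']
        have h6 := mul_pos hA1 hB1
        rw [epermA, epermB] at h6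
        have h7 : (((Equiv.Perm.sign σ : ℤ) : ℝ) * Matrix.det (Matrix.of fun i j : Fin s => y j ^ α i))
              * (((Equiv.Perm.sign σ : ℤ) : ℝ) * Matrix.det (Matrix.of fun i j : Fin s => y j ^ β i))
            = Matrix.det (Matrix.of fun i j : Fin s => y j ^ α i)
              * Matrix.det (Matrix.of fun i j : Fin s => y j ^ β i) := by
          calc (((Equiv.Perm.sign σ : ℤ) : ℝ) * Matrix.det (Matrix.of fun i j : Fin s => y j ^ α i))
              * (((Equiv.Perm.sign σ : ℤ) : ℝ) * Matrix.det (Matrix.of fun i j : Fin s => y j ^ β i))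
              = (((Equiv.Perm.sign σ : ℤ) : ℝ) * ((Equiv.Perm.sign σ : ℤ) : ℝ))
                * (Matrix.det (Matrix.of fun i j : Fin s => y j ^ α i)
                  * Matrix.det (Matrix.of fun i j : Fin s => y j ^ β i)) := by ring
            _ = _ := by rw [hsq σ, one_mul]
        rw [h7] at h6
        have hW : 0 < ∏ k, w (y k) := Finset.prod_pos (fun k _ => hwpos _ (hin k))
        exact le_of_lt (mul_pos h6 hW)
      · rw [Function.Injective] at hinj
        push_neg at hinj
        obtain ⟨k, l, h1, h2⟩ := hinj
        have hz : Matrix.det (Matrix.of fun i j : Fin s => y j ^ α i) = 0 :=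
          Matrix.det_zero_of_column_eq h2 (fun i => by
            rw [Matrix.of_apply, Matrix.of_apply, h1])
        rw [hz, zero_mul, zero_mul]
    · push_neg at hin
      obtain ⟨k, hk⟩ := hin
      have hz : ∏ j, w (y j) = 0 :=
        Finset.prod_eq_zero (Finset.mem_univ k) (by rw [hw, Set.indicator_of_notMem hk])
      rw [hz, mul_zero]
  have hsupport : 0 < volume (Function.support G) := by
    set J : Fin s → Set ℝ :=
      fun k => Set.Ioc (((s:ℝ) - (k:ℕ))/((s:ℝ)+1)) (((s:ℝ) + 1 - (k:ℕ))/((s:ℝ)+1)) with hJ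
    have hs1 : (0:ℝ) < (s:ℝ) + 1 := by positivity
    have hsub : Set.pi Set.univ J ⊆ Function.support G := by
      intro y hy
      have hyk : ∀ k, y k ∈ J k := fun k => hy k (Set.mem_univ k)
      have hkles : ∀ k : Fin s, ((k:ℕ):ℝ) ≤ (s:ℝ) := by
        intro k
        have := k.2
        exact_mod_cast le_of_lt this
      have hin : ∀ k, y k ∈ Set.Ioc (0:ℝ) 1 := by
        intro k
        have h := hyk k
        constructor
        · have h1 : (0:ℝ) ≤ ((s:ℝ) - (k:ℕ))/((s:ℝ)+1) :=
            div_nonneg (by linarith [hkles k]) (le_of_lt hs1)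
          exact lt_of_le_of_lt h1 h.1
        · have h1 : ((s:ℝ) + 1 - (k:ℕ))/((s:ℝ)+1) ≤ 1 := by
            rw [div_le_one hs1]
            have : (0:ℝ) ≤ ((k:ℕ):ℝ) := Nat.cast_nonneg _
            linarith
          exact le_trans h.2 h1
      have hsa : StrictAnti y := by
        intro i j hij
        have hij' : ((i:ℕ):ℝ) + 1 ≤ ((j:ℕ):ℝ) := by exact_mod_cast Fin.lt_def.mp hij
        have h1 : y j ≤ ((s:ℝ) + 1 - (j:ℕ))/((s:ℝ)+1) := (hyk j).2
        have h2 : ((s:ℝ) - (i:ℕ))/((s:ℝ)+1) < y i := (hyk i).1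
        have h3 : ((s:ℝ) + 1 - (j:ℕ))/((s:ℝ)+1) ≤ ((s:ℝ) - (i:ℕ))/((s:ℝ)+1) := by
          apply (div_le_div_iff_of_pos_right hs1).mpr
          linarith
        linarith
      have hypos : ∀ k, 0 < y k := fun k => (hin k).1
      have hGpos : 0 < G y := by
        rw [hGform y]
        exact mul_pos (mul_pos (vandermonde_pos s α y hα hsa hypos)
          (vandermonde_pos s β y hβ hsa hypos))
          (Finset.prod_pos fun k _ => hwpos _ (hin k))
      exact Function.mem_support.mpr (ne_of_gt hGpos)
    apply lt_of_lt_of_le _ (measure_mono hsub)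
    rw [volume_pi_pi]
    apply CanonicallyOrderedAdd.prod_pos.mpr
    intro k _
    rw [hJ]
    simp only
    rw [Real.volume_Ioc]
    apply ENNReal.ofReal_pos.mpr
    have heq : ((s:ℝ) + 1 - (k:ℕ))/((s:ℝ)+1) - ((s:ℝ) - (k:ℕ))/((s:ℝ)+1) = 1/((s:ℝ)+1) := by
      rw [div_sub_div_same]
      ring_nf
    rw [heq]
    positivity
  have hpos : 0 < ∫ y : Fin s → ℝ, G y :=
    (MeasureTheory.integral_pos_iff_support_of_nonneg_ae
      (Filter.Eventually.of_forall hGnonneg) hGint).mpr hsupport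
  have hcard : (0:ℝ) < ((Fintype.card (Equiv.Perm (Fin s)) : ℝ)) := by
    exact_mod_cast Fintype.card_pos
  nlinarith [hkey, hpos, hcard]

theorem stmt_13 (s : ℕ) (τ : ℝ) (α β : Fin s → ℕ)
    (hα : StrictAnti α) (hβ : StrictAnti β) :
    0 < Matrix.det (Matrix.of fun i j : Fin s =>
        ∫ x in (0:ℝ)..1, x ^ (α i + β j) * Real.exp (-τ * x)) := by
  exact stmt_13' s τ α β hα hβ
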